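/- arXiv:1604.01452 — 2 statements merged into one kernel-verified Lean document; each statement's English description precedes it below -/
import Mathlib

section
/- Let n be a positive integer, s > 0 and d > 0. Let S_n = {y ∈ ℝ^n : y_i ≥ 0 for all i, and y_1 + ⋯ + y_n ≤ s} be the full-dimensional simplex, and let U = {y ∈ S_n : max(y_1, …, y_n, s − (y_1 + ⋯ + y_n)) > d} be the disconnected region (the set of slack vectors having at least one slack exceeding d, where the (n+1)-st slack is s minus the sum of the others). Then the n-dimensional Lebesgue measure of U equals Σ_{k=1}^{n+1} (−1)^{k−1} · C(n+1, k) · (max(s − k·d, 0))^n / n!. -/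
open MeasureTheory Finset

lemma inclExcl {α : Type*} [MeasurableSpace α] (μ : Measure α)
    {ι : Type*} [DecidableEq ι] (I : Finset ι) :
    ∀ (A : ι → Set α), (∀ i, MeasurableSet (A i)) → (∀ i, μ (A i) ≠ ⊤) →
    (μ (⋃ i ∈ I, A i)).toReal
      = ∑ T ∈ I.powerset.filter (·.Nonempty),
          (-1 : ℝ) ^ (T.card + 1) * (μ (⋂ i ∈ T, A i)).toReal := by
  classical
  induction I using Finset.induction_on with
  | empty => intro A hm hf; simp [Finset.powerset_empty, Finset.filter_singleton]
  | @insert a I ha ih =>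
    intro A hm hf
    have hBm : MeasurableSet (⋃ i ∈ I, A i) := I.measurableSet_biUnion fun i _ => hm i
    have hBf : μ (⋃ i ∈ I, A i) ≠ ⊤ := by
      refine ne_top_of_le_ne_top ?_ (measure_biUnion_finset_le I A)
      exact (ENNReal.sum_lt_top.2 fun i _ => (hf i).lt_top).ne
    have hIf : μ ((⋃ i ∈ I, A i) ∩ A a) ≠ ⊤ :=
      ne_top_of_le_ne_top (hf a) (measure_mono Set.inter_subset_right)
    have hUf : μ ((⋃ i ∈ I, A i) ∪ A a) ≠ ⊤ := by
      refine ne_top_of_le_ne_top ?_ (measure_union_le _ _)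
      exact ENNReal.add_ne_top.2 ⟨hBf, hf a⟩
    have key : μ ((⋃ i ∈ I, A i) ∪ A a) + μ ((⋃ i ∈ I, A i) ∩ A a)
        = μ (⋃ i ∈ I, A i) + μ (A a) := measure_union_add_inter _ (hm a)
    have key2 : (μ ((⋃ i ∈ I, A i) ∪ A a)).toReal
        = (μ (⋃ i ∈ I, A i)).toReal + (μ (A a)).toReal
          - (μ ((⋃ i ∈ I, A i) ∩ A a)).toReal := by
      have h := congrArg ENNReal.toReal key
      rw [ENNReal.toReal_add hUf hIf, ENNReal.toReal_add hBf (hf a)] at h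
      linarith
    have hIA : (⋃ i ∈ I, A i) ∩ A a = ⋃ i ∈ I, (A i ∩ A a) := by
      rw [Set.iUnion₂_inter]
    have ihA := ih A hm hf
    have ihA' := ih (fun i => A i ∩ A a) (fun i => (hm i).inter (hm a))
      (fun i => ne_top_of_le_ne_top (hf a) (measure_mono Set.inter_subset_right))
    have hLHS : μ (⋃ i ∈ insert a I, A i) = μ ((⋃ i ∈ I, A i) ∪ A a) := by
      rw [Finset.set_biUnion_insert, Set.union_comm]
    -- RHS manipulation
    have e2 : ∀ T : Finset ι, T.Nonempty → A a ∩ ⋂ i ∈ T, A i = ⋂ i ∈ T, (A i ∩ A a) := by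
      intro T hT; ext y
      simp only [Set.mem_inter_iff, Set.mem_iInter]
      constructor
      · rintro ⟨hy, h⟩ i hi; exact ⟨h i hi, hy⟩
      · intro h; obtain ⟨j, hj⟩ := hT; exact ⟨(h j hj).2, fun i hi => (h i hi).1⟩
    have hfilt : I.powerset.filter (fun T => ¬ T.Nonempty) = {∅} := by
      ext T
      simp only [Finset.mem_filter, Finset.mem_powerset, Finset.not_nonempty_iff_eq_empty,
        Finset.mem_singleton]
      exact ⟨fun h => h.2, fun h => ⟨h ▸ Finset.empty_subset I, h⟩⟩
    have h2 : ∑ T ∈ I.powerset, (if (insert a T).Nonempty then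
          (-1:ℝ)^((insert a T).card + 1) * (μ (⋂ i ∈ insert a T, A i)).toReal else 0)
        = (μ (A a)).toReal - (μ (⋃ i ∈ I, (A i ∩ A a))).toReal := by
      have step1 : ∀ T ∈ I.powerset, (if (insert a T).Nonempty then
          (-1:ℝ)^((insert a T).card + 1) * (μ (⋂ i ∈ insert a T, A i)).toReal else 0)
          = (-1:ℝ)^(T.card) * (μ (A a ∩ ⋂ i ∈ T, A i)).toReal := by
        intro T hT
        rw [if_pos (Finset.insert_nonempty a T)]
        have haT : a ∉ T := fun h => ha (Finset.mem_powerset.1 hT h)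
        rw [Finset.card_insert_of_notMem haT, Finset.set_biInter_insert, pow_succ, pow_succ]
        ring
      rw [Finset.sum_congr rfl step1]
      rw [← Finset.sum_filter_add_sum_filter_not I.powerset (·.Nonempty), hfilt]
      have hne : ∑ T ∈ I.powerset.filter (·.Nonempty),
          (-1:ℝ)^(T.card) * (μ (A a ∩ ⋂ i ∈ T, A i)).toReal
          = - (μ (⋃ i ∈ I, (A i ∩ A a))).toReal := by
        rw [ihA', ← Finset.sum_neg_distrib]
        refine Finset.sum_congr rfl fun T hT => ?_
        have hTne : T.Nonempty := (Finset.mem_filter.1 hT).2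
        rw [e2 T hTne, pow_succ]
        ring
      rw [hne, Finset.sum_singleton]
      have hempty : ⋂ i ∈ (∅ : Finset ι), A i = Set.univ := by simp
      rw [hempty, Set.inter_univ, Finset.card_empty, pow_zero, one_mul]
      ring
    rw [hLHS, key2, hIA, Finset.sum_filter, Finset.sum_powerset_insert ha, h2,
      ← Finset.sum_filter, ihA]
    ring

lemma vol_simplex : ∀ (n : ℕ) (t : ℝ), 0 ≤ t →
    volume {y : Fin n → ℝ | (∀ i, 0 ≤ y i) ∧ ∑ i, y i ≤ t}
      = ENNReal.ofReal (t ^ n / n.factorial) := by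
  intro n
  induction n with
  | zero =>
    intro t ht
    have h1 : {y : Fin 0 → ℝ | (∀ i, 0 ≤ y i) ∧ ∑ i, y i ≤ t} = Set.univ := by
      ext y; simp [ht]
    rw [h1, MeasureTheory.volume_pi, Measure.pi_univ]
    simp
  | succ n ih =>
    intro t ht
    set e := MeasurableEquiv.piFinSuccAbove (fun _ : Fin (n+1) => ℝ) 0 with he
    have hmp := volume_preserving_piFinSuccAbove (fun _ : Fin (n+1) => ℝ) 0
    set S' : Set (ℝ × (Fin n → ℝ)) :=
      {p | (0 ≤ p.1 ∧ ∀ i, 0 ≤ p.2 i) ∧ p.1 + ∑ i, p.2 i ≤ t} with hS'def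
    have msum : Measurable fun z : Fin n → ℝ => ∑ i, z i :=
      Finset.measurable_sum Finset.univ fun i _ => measurable_pi_apply i
    have m1 : MeasurableSet {p : ℝ × (Fin n → ℝ) | 0 ≤ p.1} :=
      measurableSet_le measurable_const measurable_fst
    have m2 : MeasurableSet {p : ℝ × (Fin n → ℝ) | ∀ i, 0 ≤ p.2 i} := by
      rw [Set.setOf_forall]
      exact MeasurableSet.iInter fun i =>
        measurableSet_le measurable_const (measurable_snd.eval)
    have m3 : MeasurableSet {p : ℝ × (Fin n → ℝ) | p.1 + ∑ i, p.2 i ≤ t} :=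
      measurableSet_le (measurable_fst.add (msum.comp measurable_snd)) measurable_const
    have hS' : MeasurableSet S' := (m1.inter m2).inter m3
    have hpre : e ⁻¹' S' = {y : Fin (n+1) → ℝ | (∀ i, 0 ≤ y i) ∧ ∑ i, y i ≤ t} := by
      ext y
      have happ : e y = (y 0, fun j => y ((0 : Fin (n+1)).succAbove j)) := rfl
      simp only [Set.mem_preimage, happ, hS'def, Set.mem_setOf_eq, Fin.succAbove_zero,
        Fin.forall_fin_succ, Fin.sum_univ_succ]
    have key : volume {y : Fin (n+1) → ℝ | (∀ i, 0 ≤ y i) ∧ ∑ i, y i ≤ t} = volume S' := by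
      rw [← hpre]
      exact hmp.measure_preimage hS'.nullMeasurableSet
    rw [key]
    have hprod : (volume : Measure (ℝ × (Fin n → ℝ))) = (volume : Measure ℝ).prod volume := rfl
    rw [hprod, Measure.prod_apply hS']
    have hsec : ∀ x : ℝ, volume (Prod.mk x ⁻¹' S')
        = Set.indicator (Set.Icc 0 t) (fun x => ENNReal.ofReal ((t - x)^n / n.factorial)) x := by
      intro x
      by_cases hx : x ∈ Set.Icc 0 t
      · rw [Set.indicator_of_mem hx]
        have hxe : Prod.mk x ⁻¹' S' = {z : Fin n → ℝ | (∀ i, 0 ≤ z i) ∧ ∑ i, z i ≤ t - x} := by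
          ext z
          simp only [Set.mem_preimage, hS'def, Set.mem_setOf_eq]
          constructor
          · rintro ⟨⟨-, h2⟩, h3⟩; exact ⟨h2, by linarith⟩
          · rintro ⟨h2, h3⟩; exact ⟨⟨hx.1, h2⟩, by linarith⟩
        rw [hxe, ih (t - x) (by linarith [hx.2])]
      · rw [Set.indicator_of_notMem hx]
        have hxe : Prod.mk x ⁻¹' S' = ∅ := by
          ext z
          simp only [Set.mem_preimage, hS'def, Set.mem_setOf_eq, Set.mem_empty_iff_false,
            iff_false, not_and]
          rintro ⟨h1, h2⟩ h3
          have hz : 0 ≤ ∑ i, z i := Finset.sum_nonneg fun i _ => h2 i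
          simp only [Set.mem_Icc, not_and, not_le] at hx
          have := hx h1
          linarith
        rw [hxe]; simp
    rw [lintegral_congr hsec, lintegral_indicator measurableSet_Icc]
    have hint : Integrable (fun x : ℝ => (t - x)^n / n.factorial)
        (volume.restrict (Set.Icc 0 t)) :=
      (((continuous_const.sub continuous_id).pow n).div_const _).integrableOn_Icc
    have hnn : 0 ≤ᵐ[volume.restrict (Set.Icc 0 t)]
        fun x : ℝ => (t - x)^n / n.factorial := by
      refine Filter.eventually_of_mem (self_mem_ae_restrict measurableSet_Icc) ?_
      intro x hx
      have : 0 ≤ t - x := by linarith [hx.2]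
      positivity
    rw [← MeasureTheory.ofReal_integral_eq_lintegral_ofReal hint hnn]
    congr 1
    rw [MeasureTheory.integral_Icc_eq_integral_Ioc,
      ← intervalIntegral.integral_of_le ht, intervalIntegral.integral_div]
    have hcs := intervalIntegral.integral_comp_sub_left (a := (0:ℝ)) (b := t)
      (fun u => u ^ n) t
    rw [hcs]
    simp only [sub_zero, sub_self]
    rw [integral_pow]
    have hfac : ((n+1).factorial : ℝ) = (n+1) * n.factorial := by
      rw [Nat.factorial_succ]; push_cast; ring
    rw [hfac, zero_pow (Nat.succ_ne_zero n)]
    have h1 : ((n:ℝ)+1) ≠ 0 := by positivity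
    have h2 : (n.factorial : ℝ) ≠ 0 := by positivity
    field_simp
    ring

lemma null_hyperplane (n : ℕ) (j : Fin n) (c : ℝ) :
    volume {y : Fin n → ℝ | y j = c} = 0 := by
  have h := MeasureTheory.Measure.pi_hyperplane (fun _ : Fin n => (volume : Measure ℝ)) j c
  rw [MeasureTheory.volume_pi]
  exact h

lemma null_sumeq (n : ℕ) (hn : 0 < n) (c : ℝ) :
    volume {y : Fin n → ℝ | ∑ i, y i = c} = 0 := by
  classical
  set f : (Fin n → ℝ) →ₗ[ℝ] ℝ := ∑ i : Fin n, LinearMap.proj i with hfdef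
  have hf : ∀ y : Fin n → ℝ, f y = ∑ i, y i := by
    intro y; simp [hfdef, LinearMap.sum_apply, LinearMap.proj_apply]
  have hker : ((LinearMap.ker f : Submodule ℝ (Fin n → ℝ)) : Set (Fin n → ℝ))
      = {y | ∑ i, y i = 0} := by
    ext y; simp [LinearMap.mem_ker, hf]
  set y₀ : Fin n → ℝ := fun _ => c / n with hy₀def
  have hy₀ : ∑ i : Fin n, y₀ i = c := by
    rw [hy₀def]
    rw [Finset.sum_const, Finset.card_univ, Fintype.card_fin, nsmul_eq_mul]
    field_simp
  have hpre : (fun y : Fin n → ℝ => y + y₀) ⁻¹' {y : Fin n → ℝ | ∑ i, y i = c}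
      = {y | ∑ i, y i = 0} := by
    ext y
    simp only [Set.mem_preimage, Set.mem_setOf_eq, Pi.add_apply, Finset.sum_add_distrib, hy₀]
    constructor <;> intro h <;> linarith
  have step := measure_preimage_add_right (volume : Measure (Fin n → ℝ)) y₀
    {y : Fin n → ℝ | ∑ i, y i = c}
  rw [← step, hpre, ← hker]
  apply Measure.addHaar_submodule
  rw [Ne, LinearMap.ker_eq_top]
  intro h
  have h1 : f (fun _ => 1) = 0 := by rw [h]; rfl
  rw [hf] at h1
  simp only [Finset.sum_const, Finset.card_univ, Fintype.card_fin, nsmul_eq_mul,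
    mul_one, Nat.cast_eq_zero] at h1
  omega

noncomputable def slack (n : ℕ) (s : ℝ) (j : Fin (n+1)) (y : Fin n → ℝ) : ℝ :=
  if h : (j : ℕ) < n then y ⟨j, h⟩ else s - ∑ i, y i

lemma slack_castSucc (n : ℕ) (s : ℝ) (i : Fin n) (y : Fin n → ℝ) :
    slack n s (Fin.castSucc i) y = y i := by
  rw [slack, dif_pos (by simp)]
  congr 1

lemma slack_last (n : ℕ) (s : ℝ) (y : Fin n → ℝ) :
    slack n s (Fin.last n) y = s - ∑ i, y i := by
  rw [slack, dif_neg (by simp)]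

lemma vol_inter (n : ℕ) (hn : 0 < n) (s d : ℝ) (hd : 0 < d)
    (T : Finset (Fin (n+1))) (hT : T.Nonempty) :
    volume {y : Fin n → ℝ | (∀ i, 0 ≤ y i) ∧ ∑ i, y i ≤ s ∧ ∀ j ∈ T, d < slack n s j y}
      = ENNReal.ofReal ((max (s - T.card * d) 0) ^ n / n.factorial) := by
  classical
  set k : ℕ := T.card with hk
  set c : Fin n → ℝ := fun i => if Fin.castSucc i ∈ T then d else 0 with hc
  set k' : ℕ := (Finset.univ.filter fun i : Fin n => Fin.castSucc i ∈ T).card with hk'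
  have hsumc : ∑ i, c i = k' * d := by
    rw [hc, hk']
    rw [← Finset.sum_filter (fun i : Fin n => Fin.castSucc i ∈ T) (fun _ => d)]
    rw [Finset.sum_const, nsmul_eq_mul]
  have hcnn : ∀ i, 0 ≤ c i := by
    intro i; rw [hc]; dsimp only; split <;> [exact hd.le; exact le_refl 0]
  have hkpos : 1 ≤ k := Finset.card_pos.2 hT
  have hbij : k' = (T.filter fun j => j ≠ Fin.last n).card := by
    rw [hk']
    apply Finset.card_bij (fun i _ => Fin.castSucc i)
    · intro i hi
      simp only [Finset.mem_filter, Finset.mem_univ, true_and] at hi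
      simp only [Finset.mem_filter]
      exact ⟨hi, (Fin.castSucc_lt_last i).ne⟩
    · intro i _ j _ h; exact Fin.castSucc_injective n h
    · intro j hj
      simp only [Finset.mem_filter] at hj
      obtain ⟨hjT, hjne⟩ := hj
      refine ⟨Fin.castPred j hjne, ?_, Fin.castSucc_castPred j hjne⟩
      simp only [Finset.mem_filter, Finset.mem_univ, true_and, Fin.castSucc_castPred]
      exact hjT
  have hcases : (Fin.last n ∈ T ∧ k = k' + 1) ∨ (Fin.last n ∉ T ∧ k = k') := by
    by_cases hlast : Fin.last n ∈ T
    · left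
      refine ⟨hlast, ?_⟩
      rw [Finset.filter_ne' T (Fin.last n), Finset.card_erase_of_mem hlast] at hbij
      omega
    · right
      refine ⟨hlast, ?_⟩
      have heq : T.filter (fun j => j ≠ Fin.last n) = T :=
        Finset.filter_true_of_mem fun j hj => fun h => hlast (h ▸ hj)
      rw [heq] at hbij
      omega
  set Sop : Set (Fin n → ℝ) := {y | (∀ i, 0 < y i) ∧ ∑ i, y i < s - k * d} with hSop
  set Scl : Set (Fin n → ℝ) := {y | (∀ i, 0 ≤ y i) ∧ ∑ i, y i ≤ s - k * d} with hScl
  set B : Set (Fin n → ℝ) := (fun y => y + c) ⁻¹'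
    {y : Fin n → ℝ | (∀ i, 0 ≤ y i) ∧ ∑ i, y i ≤ s ∧ ∀ j ∈ T, d < slack n s j y} with hB
  have hvolB : volume {y : Fin n → ℝ |
      (∀ i, 0 ≤ y i) ∧ ∑ i, y i ≤ s ∧ ∀ j ∈ T, d < slack n s j y} = volume B :=
    (measure_preimage_add_right volume c _).symm
  have hsum' : ∀ y : Fin n → ℝ, ∑ i, (y i + c i) = ∑ i, y i + k' * d := by
    intro y; rw [Finset.sum_add_distrib, hsumc]
  have hBsub : B ⊆ Scl := by
    intro y hy
    simp only [hB, Set.mem_preimage, Set.mem_setOf_eq, Pi.add_apply] at hy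
    obtain ⟨h1, h2, h3⟩ := hy
    rw [hsum'] at h2
    have hynn : ∀ i, 0 ≤ y i := by
      intro i
      by_cases hiT : Fin.castSucc i ∈ T
      · have h4 := h3 _ hiT
        rw [slack_castSucc, Pi.add_apply] at h4
        have hci : c i = d := by rw [hc]; exact if_pos hiT
        rw [hci] at h4; linarith
      · have h4 := h1 i
        have hci : c i = 0 := by rw [hc]; exact if_neg hiT
        rw [hci, add_zero] at h4; exact h4
    refine ⟨hynn, ?_⟩
    rcases hcases with ⟨hlast, hkk⟩ | ⟨hlast, hkk⟩
    · have h4 := h3 _ hlast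
      rw [slack_last] at h4
      have h5 : ∑ i, (y + c) i = ∑ i, y i + k' * d := by
        simp only [Pi.add_apply]; exact hsum' y
      rw [h5] at h4
      have hkd : (k : ℝ) * d = k' * d + d := by
        have : (k : ℝ) = (k' : ℝ) + 1 := by exact_mod_cast congrArg (Nat.cast : ℕ → ℝ) hkk
        rw [this]; ring
      linarith
    · have hkd : (k : ℝ) * d = k' * d := by
        have : (k : ℝ) = (k' : ℝ) := by exact_mod_cast congrArg (Nat.cast : ℕ → ℝ) hkk
        rw [this]
      linarith
  have hSopB : Sop ⊆ B := by
    rintro y ⟨h1, h2⟩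
    simp only [hB, Set.mem_preimage, Set.mem_setOf_eq, Pi.add_apply]
    refine ⟨?_, ?_, ?_⟩
    · intro i
      exact add_nonneg (h1 i).le (hcnn i)
    · rw [hsum']
      rcases hcases with ⟨hlast, hkk⟩ | ⟨hlast, hkk⟩
      · have hkd : (k : ℝ) * d = k' * d + d := by
          have : (k : ℝ) = (k' : ℝ) + 1 := by exact_mod_cast congrArg (Nat.cast : ℕ → ℝ) hkk
          rw [this]; ring
        linarith
      · have hkd : (k : ℝ) * d = k' * d := by
          have : (k : ℝ) = (k' : ℝ) := by exact_mod_cast congrArg (Nat.cast : ℕ → ℝ) hkk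
          rw [this]
        linarith
    · intro j hj
      by_cases hjn : (j : ℕ) < n
      · have hji : j = Fin.castSucc ⟨(j : ℕ), hjn⟩ := Fin.ext (by simp)
        rw [hji, slack_castSucc, Pi.add_apply]
        have hci : c ⟨(j : ℕ), hjn⟩ = d := by
          rw [hc]; exact if_pos (hji ▸ hj)
        rw [hci]
        have := h1 ⟨(j : ℕ), hjn⟩
        linarith
      · have hjl : j = Fin.last n := by
          apply Fin.ext
          rw [Fin.val_last]
          have := j.isLt
          omega
        rw [hjl, slack_last]
        have h5 : ∑ i, (y + c) i = ∑ i, y i + k' * d := by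
          simp only [Pi.add_apply]; exact hsum' y
        rw [h5]
        have hlastT : Fin.last n ∈ T := hjl ▸ hj
        rcases hcases with ⟨-, hkk⟩ | ⟨hno, -⟩
        · have hkd : (k : ℝ) * d = k' * d + d := by
            have : (k : ℝ) = (k' : ℝ) + 1 := by exact_mod_cast congrArg (Nat.cast : ℕ → ℝ) hkk
            rw [this]; ring
          linarith
        · exact absurd hlastT hno
  have hcl_vol : volume Scl = ENNReal.ofReal ((max (s - k * d) 0) ^ n / n.factorial) := by
    rcases le_or_gt 0 (s - k * d) with h | h
    · rw [max_eq_left h]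
      exact vol_simplex n _ h
    · have hemp : Scl = ∅ := by
        ext y
        simp only [hScl, Set.mem_setOf_eq, Set.mem_empty_iff_false, iff_false, not_and]
        intro h1 h2
        have : 0 ≤ ∑ i, y i := Finset.sum_nonneg fun i _ => h1 i
        linarith
      rw [hemp, max_eq_right h.le, zero_pow hn.ne', measure_empty]
      simp
  have hdiff : volume (Scl \ Sop) = 0 := by
    have hsub : Scl \ Sop ⊆ (⋃ i : Fin n, {y : Fin n → ℝ | y i = 0})
        ∪ {y : Fin n → ℝ | ∑ i, y i = s - k * d} := by
      rintro y ⟨⟨h1, h2⟩, hy⟩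
      rw [hSop, Set.mem_setOf_eq, not_and_or] at hy
      rcases hy with h | h
      · push_neg at h
        obtain ⟨i, hi⟩ := h
        exact Or.inl (Set.mem_iUnion.2 ⟨i, le_antisymm hi (h1 i)⟩)
      · push_neg at h
        exact Or.inr (le_antisymm h2 h)
    refine measure_mono_null hsub ?_
    refine measure_union_null ?_ (null_sumeq n hn _)
    exact measure_iUnion_null fun i => null_hyperplane n i 0
  have hopcl : volume Sop = volume Scl := by
    refine le_antisymm (measure_mono fun y hy => ⟨fun i => (hy.1 i).le, hy.2.le⟩) ?_
    calc volume Scl ≤ volume (Sop ∪ (Scl \ Sop)) := by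
          refine measure_mono fun y hy => ?_
          by_cases h : y ∈ Sop
          · exact Or.inl h
          · exact Or.inr ⟨hy, h⟩
      _ ≤ volume Sop + volume (Scl \ Sop) := measure_union_le _ _
      _ = volume Sop := by rw [hdiff, add_zero]
  have hBvol : volume B = volume Scl := by
    refine le_antisymm (measure_mono hBsub) ?_
    rw [← hopcl]
    exact measure_mono hSopB
  rw [hvolB, hBvol, hcl_vol]

/-- The Lebesgue measure of the disconnected region
`U = {y ∈ S_n : some slack exceeds d}` inside the full-dimensional slack simplex
`S_n = {y ∈ ℝ^n : y ≥ 0, ∑ y_i ≤ s}` (the `(n+1)`-st slack being `s - ∑ y_i`) is given by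
the inclusion–exclusion formula `∑_{k=1}^{n+1} (-1)^{k-1} C(n+1,k) max(s - k d, 0)^n / n!`. -/
theorem stmt2 (n : ℕ) (hn : 0 < n) (s d : ℝ) (hs : 0 < s) (hd : 0 < d) :
    (volume {y : Fin n → ℝ |
        ((∀ i, 0 ≤ y i) ∧ ∑ i, y i ≤ s) ∧
          ((∃ i, d < y i) ∨ d < s - ∑ i, y i)}).toReal
      = ∑ k ∈ Finset.Icc 1 (n + 1),
          (-1 : ℝ) ^ (k - 1) * (n + 1).choose k * (max (s - k * d) 0) ^ n / n.factorial := by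
  classical
  set A : Fin (n+1) → Set (Fin n → ℝ) :=
    fun j => {y | (∀ i, 0 ≤ y i) ∧ ∑ i, y i ≤ s ∧ d < slack n s j y} with hA
  have msum : Measurable fun z : Fin n → ℝ => ∑ i, z i :=
    Finset.measurable_sum Finset.univ fun i _ => measurable_pi_apply i
  have hmslack : ∀ j, Measurable (slack n s j) := by
    intro j
    by_cases h : (j : ℕ) < n
    · have : slack n s j = fun y => y ⟨(j : ℕ), h⟩ := by
        funext y; rw [slack, dif_pos h]
      rw [this]; exact measurable_pi_apply _
    · have : slack n s j = fun y => s - ∑ i, y i := by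
        funext y; rw [slack, dif_neg h]
      rw [this]; exact measurable_const.sub msum
  have hmeasA : ∀ j, MeasurableSet (A j) := by
    intro j
    have m1 : MeasurableSet {y : Fin n → ℝ | ∀ i, 0 ≤ y i} := by
      rw [Set.setOf_forall]
      exact MeasurableSet.iInter fun i =>
        measurableSet_le measurable_const (measurable_pi_apply i)
    have m2 : MeasurableSet {y : Fin n → ℝ | ∑ i, y i ≤ s} :=
      measurableSet_le msum measurable_const
    have m3 : MeasurableSet {y : Fin n → ℝ | d < slack n s j y} :=
      measurableSet_lt measurable_const (hmslack j)
    exact m1.inter (m2.inter m3)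
  have hfinA : ∀ j, volume (A j) ≠ ⊤ := by
    intro j
    have hsub : A j ⊆ {y : Fin n → ℝ | (∀ i, 0 ≤ y i) ∧ ∑ i, y i ≤ s} :=
      fun y hy => ⟨hy.1, hy.2.1⟩
    refine ne_top_of_le_ne_top ?_ (measure_mono hsub)
    rw [vol_simplex n s hs.le]
    exact ENNReal.ofReal_ne_top
  have hUeq : {y : Fin n → ℝ |
      ((∀ i, 0 ≤ y i) ∧ ∑ i, y i ≤ s) ∧ ((∃ i, d < y i) ∨ d < s - ∑ i, y i)}
      = ⋃ j ∈ (Finset.univ : Finset (Fin (n+1))), A j := by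
    ext y
    simp only [Set.mem_setOf_eq, Set.mem_iUnion, Finset.mem_univ, exists_true_left, hA]
    constructor
    · rintro ⟨⟨h1, h2⟩, h3 | h4⟩
      · obtain ⟨i, hi⟩ := h3
        exact ⟨Fin.castSucc i, h1, h2, by rw [slack_castSucc]; exact hi⟩
      · exact ⟨Fin.last n, h1, h2, by rw [slack_last]; exact h4⟩
    · rintro ⟨j, h1, h2, h3⟩
      refine ⟨⟨h1, h2⟩, ?_⟩
      by_cases hj : (j : ℕ) < n
      · left
        refine ⟨⟨(j : ℕ), hj⟩, ?_⟩
        have hji : j = Fin.castSucc ⟨(j : ℕ), hj⟩ := Fin.ext (by simp)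
        rw [hji, slack_castSucc] at h3
        exact h3
      · right
        have hjl : j = Fin.last n := by
          apply Fin.ext; rw [Fin.val_last]; have := j.isLt; omega
        rw [hjl, slack_last] at h3
        exact h3
  rw [hUeq, inclExcl volume Finset.univ A hmeasA hfinA]
  have hterm : ∀ T ∈ (Finset.univ : Finset (Fin (n+1))).powerset.filter (·.Nonempty),
      (-1:ℝ)^(T.card+1) * (volume (⋂ j ∈ T, A j)).toReal
      = (-1:ℝ)^(T.card+1) * ((max (s - T.card * d) 0) ^ n / n.factorial) := by
    intro T hT
    have hTne : T.Nonempty := (Finset.mem_filter.1 hT).2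
    have hInter : ⋂ j ∈ T, A j
        = {y : Fin n → ℝ | (∀ i, 0 ≤ y i) ∧ ∑ i, y i ≤ s ∧ ∀ j ∈ T, d < slack n s j y} := by
      ext y
      simp only [Set.mem_iInter, hA, Set.mem_setOf_eq]
      constructor
      · intro h
        obtain ⟨j₀, hj₀⟩ := hTne
        exact ⟨(h j₀ hj₀).1, (h j₀ hj₀).2.1, fun j hj => (h j hj).2.2⟩
      · rintro ⟨h1, h2, h3⟩ j hj
        exact ⟨h1, h2, h3 j hj⟩
    rw [hInter, vol_inter n hn s d hd T hTne, ENNReal.toReal_ofReal (by positivity)]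
  rw [Finset.sum_congr rfl hterm, Finset.sum_filter]
  set F : ℕ → ℝ := fun m => if m = 0 then 0
    else (-1:ℝ)^(m+1) * ((max (s - m * d) 0) ^ n / n.factorial) with hF
  have hswap : ∀ T : Finset (Fin (n+1)),
      (if T.Nonempty then (-1:ℝ)^(T.card+1) * ((max (s - T.card * d) 0) ^ n / n.factorial) else 0)
      = F T.card := by
    intro T
    by_cases h : T.Nonempty
    · rw [if_pos h]
      simp only [hF]
      rw [if_neg (Finset.card_ne_zero.2 h)]
    · rw [if_neg h]
      simp only [hF]
      rw [if_pos (Finset.card_eq_zero.2 (Finset.not_nonempty_iff_eq_empty.1 h))]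
  rw [Finset.sum_congr rfl (fun T _ => hswap T), Finset.sum_powerset_apply_card F]
  simp only [Finset.card_univ, Fintype.card_fin]
  have hss : Finset.Icc 1 (n+1) ⊆ Finset.range (n+2) := by
    intro x hx
    simp only [Finset.mem_Icc] at hx
    simp only [Finset.mem_range]
    omega
  have hvan : ∀ x ∈ Finset.range (n+2), x ∉ Finset.Icc 1 (n+1) → (n+1).choose x • F x = 0 := by
    intro x hx hxn
    have hx0 : x = 0 := by
      simp only [Finset.mem_range] at hx
      simp only [Finset.mem_Icc, not_and, not_le] at hxn
      omega
    subst hx0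
    simp [hF]
  rw [← Finset.sum_subset hss hvan]
  refine Finset.sum_congr rfl fun k hk => ?_
  have hk1 : 1 ≤ k := (Finset.mem_Icc.1 hk).1
  obtain ⟨m, rfl⟩ : ∃ m, k = m + 1 := ⟨k - 1, by omega⟩
  rw [hF]
  simp only [Nat.add_sub_cancel]
  rw [if_neg (Nat.succ_ne_zero m), nsmul_eq_mul]
  have hsign : (-1:ℝ)^(m+1+1) = (-1)^m := by
    rw [pow_succ, pow_succ]; ring
  rw [hsign]
  ring
end

section
/- Let n be a positive integer, let a_1, …, a_n > 0 and b > 0 be reals, and let T = {x ∈ ℝ^n : a_1 x_1 + ⋯ + a_n x_n ≤ b} be a half-space and C = [0,1]^n the unit hypercube. Then the n-dimensional Lebesgue measure of T ∩ C equals (1 / (n! · a_1 ⋯ a_n)) · Σ_{v ∈ {0,1}^n} (−1)^{v_1 + ⋯ + v_n} · (max(b − (a_1 v_1 + ⋯ + a_n v_n), 0))^n. -/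
open MeasureTheory Finset


lemma measurableSet_simplex {n : ℕ} (a : Fin n → ℝ) (c : ℝ) :
    MeasurableSet {x : Fin n → ℝ | (∀ i, 0 ≤ x i) ∧ ∑ i, a i * x i ≤ c} := by
  have : {x : Fin n → ℝ | (∀ i, 0 ≤ x i) ∧ ∑ i, a i * x i ≤ c}
      = (⋂ i, {x : Fin n → ℝ | 0 ≤ x i}) ∩ {x : Fin n → ℝ | ∑ i, a i * x i ≤ c} := by
    ext x; simp [Set.mem_iInter]
  rw [this]
  exact (MeasurableSet.iInter fun i =>
      measurableSet_le measurable_const (measurable_pi_apply i)).inter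
    (measurableSet_le (Finset.measurable_sum _ fun i _ =>
      (by fun_prop)) measurable_const)

lemma simplex_empty {n : ℕ} (a : Fin n → ℝ) (ha : ∀ i, 0 < a i) {c : ℝ} (hc : c < 0) :
    {x : Fin n → ℝ | (∀ i, 0 ≤ x i) ∧ ∑ i, a i * x i ≤ c} = ∅ := by
  ext x
  simp only [Set.mem_setOf_eq, Set.mem_empty_iff_false, iff_false, not_and]
  intro hx hs
  have : (0:ℝ) ≤ ∑ i, a i * x i :=
    Finset.sum_nonneg fun i _ => mul_nonneg (ha i).le (hx i)
  linarith

lemma volume_simplex : ∀ (n : ℕ) (a : Fin n → ℝ), (∀ i, 0 < a i) → ∀ c : ℝ, 0 ≤ c →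
    volume {x : Fin n → ℝ | (∀ i, 0 ≤ x i) ∧ ∑ i, a i * x i ≤ c}
      = ENNReal.ofReal (c ^ n / (n.factorial * ∏ i, a i)) := by
  intro n
  induction n with
  | zero =>
    intro a ha c hc
    have : {x : Fin 0 → ℝ | (∀ i, 0 ≤ x i) ∧ ∑ i, a i * x i ≤ c} = Set.univ := by
      ext x
      simp only [Set.mem_setOf_eq, Set.mem_univ, iff_true]
      exact ⟨fun i => i.elim0, by simpa using hc⟩
    rw [this]
    rw [show (volume : Measure (Fin 0 → ℝ)) Set.univ = 1 by
      rw [MeasureTheory.volume_pi, Measure.pi_univ]; simp]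
    simp [ENNReal.ofReal_one]
  | succ n IH =>
    intro a ha c hc
    set a' : Fin n → ℝ := fun j => a j.succ with ha'def
    have ha'pos : ∀ j, 0 < a' j := fun j => ha j.succ
    set K : ℝ := n.factorial * ∏ j, a' j with hKdef
    have hprodpos : 0 < ∏ j, a' j := Finset.prod_pos fun j _ => ha'pos j
    have hKpos : 0 < K := by positivity
    have ha0 : 0 < a 0 := ha 0
    set L : ℝ := c / a 0 with hLdef
    have hL0 : 0 ≤ L := div_nonneg hc ha0.le
    set S := {x : Fin (n+1) → ℝ | (∀ i, 0 ≤ x i) ∧ ∑ i, a i * x i ≤ c} with hSdef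
    set e := MeasurableEquiv.piFinSuccAbove (fun _ : Fin (n+1) => ℝ) 0 with hedef
    have hmp := volume_preserving_piFinSuccAbove (fun _ : Fin (n+1) => ℝ) 0
    set T : Set (ℝ × (Fin n → ℝ)) := e.symm ⁻¹' S with hTdef
    have hTmeas : MeasurableSet T := (measurableSet_simplex a c).preimage e.symm.measurable
    have h1 : volume S = volume T := by
      have hpre : S = e ⁻¹' T := by rw [hTdef]; ext x; simp
      rw [hpre]
      exact hmp.measure_preimage hTmeas.nullMeasurableSet
    have hmem : ∀ (t : ℝ) (y : Fin n → ℝ), (t, y) ∈ T ↔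
        ((0 ≤ t ∧ ∀ j, 0 ≤ y j) ∧ a 0 * t + ∑ j, a' j * y j ≤ c) := by
      intro t y
      rw [hTdef, hedef]
      simp only [Set.mem_preimage, MeasurableEquiv.piFinSuccAbove_symm_apply, hSdef,
        Set.mem_setOf_eq, Fin.insertNth_zero, Fin.insertNthEquiv_zero, Fin.consEquiv_apply, Fin.sum_univ_succ, Fin.forall_fin_succ,
        Fin.cons_zero, Fin.cons_succ, ha'def]
    have hslice : ∀ t : ℝ, volume (Prod.mk t ⁻¹' T) =
        ENNReal.ofReal ((Set.Icc 0 L).indicator (fun t => (c - a 0 * t) ^ n / K) t) := by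
      intro t
      by_cases hcase : t ∈ Set.Icc 0 L
      · obtain ⟨h0t, htL⟩ := hcase
        have hct : 0 ≤ c - a 0 * t := by
          rw [hLdef, le_div_iff₀ ha0] at htL; nlinarith
        have hps : Prod.mk t ⁻¹' T
            = {y : Fin n → ℝ | (∀ j, 0 ≤ y j) ∧ ∑ j, a' j * y j ≤ c - a 0 * t} := by
          ext y
          rw [Set.mem_preimage, hmem t y]
          simp only [Set.mem_setOf_eq]
          constructor
          · rintro ⟨⟨_, hy⟩, hsum⟩; exact ⟨hy, by linarith⟩
          · rintro ⟨hy, hsum⟩; exact ⟨⟨h0t, hy⟩, by linarith⟩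
        have hmemIcc : t ∈ Set.Icc 0 L := ⟨h0t, htL⟩
        rw [hps, IH a' ha'pos _ hct, Set.indicator_of_mem hmemIcc]
      · have hps : Prod.mk t ⁻¹' T = ∅ := by
          ext y
          rw [Set.mem_preimage, hmem t y]
          simp only [Set.mem_empty_iff_false, iff_false, not_and]
          rintro ⟨h0t, hy⟩ hsum
          have hnn : (0:ℝ) ≤ ∑ j, a' j * y j :=
            Finset.sum_nonneg fun j _ => mul_nonneg (ha'pos j).le (hy j)
          have hLt : L < t := by
            by_contra hle
            exact hcase ⟨h0t, not_lt.mp hle⟩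
          rw [hLdef, div_lt_iff₀ ha0] at hLt
          nlinarith
        rw [hps, Set.indicator_of_notMem hcase]
        simp
    have hcont : Continuous (fun t : ℝ => (c - a 0 * t) ^ n / K) := by fun_prop
    have hint : Integrable ((Set.Icc 0 L).indicator fun t => (c - a 0 * t) ^ n / K) := by
      rw [integrable_indicator_iff measurableSet_Icc]
      exact hcont.integrableOn_Icc
    have hnn : 0 ≤ᵐ[volume] (Set.Icc 0 L).indicator fun t => (c - a 0 * t) ^ n / K := by
      refine Filter.Eventually.of_forall fun t => ?_
      refine Set.indicator_nonneg (fun t ht => ?_) t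
      have hct : 0 ≤ c - a 0 * t := by
        have := ht.2
        rw [hLdef, le_div_iff₀ ha0] at this; nlinarith
      positivity
    have h3 : volume T
        = ENNReal.ofReal (∫ t, (Set.Icc 0 L).indicator (fun t => (c - a 0 * t) ^ n / K) t) := by
      rw [Measure.volume_eq_prod, Measure.prod_apply hTmeas,
        ofReal_integral_eq_lintegral_ofReal hint hnn]
      exact lintegral_congr hslice
    have h4 : ∫ t, (Set.Icc 0 L).indicator (fun t => (c - a 0 * t) ^ n / K) t
        = c ^ (n+1) / (((n:ℝ)+1) * a 0 * K) := by
      rw [MeasureTheory.integral_indicator measurableSet_Icc,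
        MeasureTheory.integral_Icc_eq_integral_Ioc, ← intervalIntegral.integral_of_le hL0]
      have hderiv : ∀ t ∈ Set.uIcc (0:ℝ) L,
          HasDerivAt (fun t => -((c - a 0 * t) ^ (n+1) / (((n:ℝ)+1) * a 0 * K)))
            ((c - a 0 * t) ^ n / K) t := by
        intro t _
        have hd1 : HasDerivAt (fun t : ℝ => c - a 0 * t) (-(a 0)) t := by
          simpa using ((hasDerivAt_id t).const_mul (a 0)).const_sub c
        have hd2 := ((hd1.pow (n+1)).div_const (((n:ℝ)+1) * a 0 * K)).neg
        have heq : (c - a 0 * t) ^ n / K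
            = -((n+1 : ℕ) * (c - a 0 * t) ^ (n + 1 - 1) * -(a 0) / (((n:ℝ)+1) * a 0 * K)) := by
          simp only [Nat.add_sub_cancel]
          push_cast
          field_simp
        rw [heq]
        exact hd2
      rw [intervalIntegral.integral_eq_sub_of_hasDerivAt hderiv (hcont.intervalIntegrable _ _)]
      have hc0 : c - a 0 * L = 0 := by
        rw [hLdef]; field_simp; ring
      rw [hc0]
      simp [pow_succ]
    rw [h1, h3, h4]
    congr 1
    rw [Fin.prod_univ_succ, Nat.factorial_succ]
    push_cast
    rw [← ha'def]
    ring_nf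
    rw [hKdef]
    ring


lemma measurableSet_lb {n : ℕ} (a : Fin n → ℝ) (b : ℝ) (w : Fin n → ℝ) :
    MeasurableSet {x : Fin n → ℝ | (∀ i, w i ≤ x i) ∧ ∑ i, a i * x i ≤ b} := by
  have : {x : Fin n → ℝ | (∀ i, w i ≤ x i) ∧ ∑ i, a i * x i ≤ b}
      = (⋂ i, {x : Fin n → ℝ | w i ≤ x i}) ∩ {x : Fin n → ℝ | ∑ i, a i * x i ≤ b} := by
    ext x; simp [Set.mem_iInter]
  rw [this]
  exact (MeasurableSet.iInter fun i =>
      measurableSet_le measurable_const (measurable_pi_apply i)).inter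
    (measurableSet_le (Finset.measurable_sum _ fun i _ =>
      (by fun_prop)) measurable_const)

lemma volume_coord_eq_one {n : ℕ} (i : Fin n) :
    volume {x : Fin n → ℝ | x i = 1} = 0 := by
  classical
  have h : {x : Fin n → ℝ | x i = 1}
      = Set.pi Set.univ (fun j => if j = i then ({1} : Set ℝ) else Set.univ) := by
    ext x
    simp only [Set.mem_setOf_eq, Set.mem_pi, Set.mem_univ, true_implies]
    constructor
    · intro h j
      by_cases hj : j = i
      · subst hj; simp [h]
      · simp [hj]
    · intro h
      have := h i
      simpa using this
  rw [h, volume_pi_pi]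
  exact Finset.prod_eq_zero (Finset.mem_univ i) (by simp)

lemma volume_shift {n : ℕ} (a : Fin n → ℝ) (b : ℝ) (v : Fin n → Bool) :
    volume {x : Fin n → ℝ | (∀ i, (if v i then (1:ℝ) else 0) ≤ x i) ∧ ∑ i, a i * x i ≤ b}
      = volume {x : Fin n → ℝ | (∀ i, 0 ≤ x i) ∧
          ∑ i, a i * x i ≤ b - ∑ i, a i * (if v i then 1 else 0)} := by
  classical
  set w : Fin n → ℝ := fun i => if v i then 1 else 0 with hw
  have hsum : ∀ x : Fin n → ℝ, ∑ i, a i * (x i + w i) = ∑ i, a i * x i + ∑ i, a i * w i := by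
    intro x
    rw [← Finset.sum_add_distrib]
    exact Finset.sum_congr rfl fun i _ => by ring
  have hpre : (fun x : Fin n → ℝ => x + w) ⁻¹' {x | (∀ i, w i ≤ x i) ∧ ∑ i, a i * x i ≤ b}
      = {x : Fin n → ℝ | (∀ i, 0 ≤ x i) ∧ ∑ i, a i * x i ≤ b - ∑ i, a i * w i} := by
    ext x
    simp only [Set.mem_preimage, Set.mem_setOf_eq, Pi.add_apply]
    rw [hsum x]
    constructor
    · rintro ⟨h1, h2⟩
      exact ⟨fun i => by have := h1 i; linarith, by linarith⟩
    · rintro ⟨h1, h2⟩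
      exact ⟨fun i => by have := h1 i; linarith, by linarith⟩
  conv_lhs => rw [show {x : Fin n → ℝ | (∀ i, (if v i then (1:ℝ) else 0) ≤ x i) ∧ ∑ i, a i * x i ≤ b}
      = {x : Fin n → ℝ | (∀ i, w i ≤ x i) ∧ ∑ i, a i * x i ≤ b} from rfl]
  rw [← measure_preimage_add_right volume w, hpre]

lemma neg_prod_card {α : Type*} [DecidableEq α] (t : Finset α) (p : α → ℝ) :
    ∏ i ∈ t, (-p i) = (-1 : ℝ) ^ t.card * ∏ i ∈ t, p i := by
  rw [← Finset.prod_const, ← Finset.prod_mul_distrib]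
  exact Finset.prod_congr rfl fun i _ => by ring

lemma sum_bool_expand {n : ℕ} (p q : Fin n → ℝ) :
    ∑ v : Fin n → Bool, (-1 : ℝ) ^ (Finset.univ.filter fun i => v i).card *
        ∏ i, (if v i then p i else q i)
      = ∏ i, (q i - p i) := by
  classical
  rw [show (∏ i, (q i - p i)) = ∏ i, (-p i + q i) from
    Finset.prod_congr rfl fun i _ => by ring]
  rw [Finset.prod_add, Finset.powerset_univ]
  refine Fintype.sum_bijective (fun v : Fin n → Bool => Finset.univ.filter fun i => v i)
    ⟨?_, ?_⟩ _ _ ?_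
  · intro v u h
    funext i
    rw [Bool.eq_iff_iff]
    have := Finset.ext_iff.mp h i
    simpa using this
  · intro t
    refine ⟨fun i => decide (i ∈ t), ?_⟩
    ext i
    simp
  · intro v
    rw [Finset.prod_ite p q, Finset.filter_not, neg_prod_card]
    ring

/-- The volume of the intersection of the half-space `{x : ∑ aᵢ xᵢ ≤ b}` (with positive
coefficients) with the unit hypercube `[0,1]^n` is given by the inclusion–exclusion formula
`(1/(n! ∏ aᵢ)) ∑_{v ∈ {0,1}^n} (-1)^{∑ vᵢ} max(b - aᵀv, 0)^n`. -/
theorem stmt10 (n : ℕ) (hn : 0 < n) (a : Fin n → ℝ) (b : ℝ)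
    (ha : ∀ i, 0 < a i) (hb : 0 < b) :
    (volume {x : Fin n → ℝ | (∀ i, x i ∈ Set.Icc (0:ℝ) 1) ∧ ∑ i, a i * x i ≤ b}).toReal
      = (1 / (n.factorial * ∏ i, a i)) *
          ∑ v : Fin n → Bool,
            (-1 : ℝ) ^ (Finset.univ.filter fun i => v i).card *
              (max (b - ∑ i, a i * (if v i then 1 else 0)) 0) ^ n := by
  classical
  have hKpos : (0:ℝ) < n.factorial * ∏ i, a i := by
    have : (0:ℝ) < ∏ i, a i := Finset.prod_pos fun i _ => ha i
    positivity
  set Sv : (Fin n → Bool) → Set (Fin n → ℝ) := fun v =>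
    {x | (∀ i, (if v i then (1:ℝ) else 0) ≤ x i) ∧ ∑ i, a i * x i ≤ b} with hSv
  have hSvmeas : ∀ v, MeasurableSet (Sv v) := fun v => measurableSet_lb a b _
  have hSvvol : ∀ v, volume (Sv v)
      = ENNReal.ofReal (max (b - ∑ i, a i * (if v i then 1 else 0)) 0 ^ n
          / (n.factorial * ∏ i, a i)) := by
    intro v
    rw [hSv]
    rw [volume_shift a b v]
    rcases le_or_gt 0 (b - ∑ i, a i * (if v i then 1 else 0)) with h | h
    · rw [volume_simplex n a ha _ h, max_eq_left h]
    · rw [simplex_empty a ha h, measure_empty, max_eq_right h.le, zero_pow hn.ne',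
        zero_div, ENNReal.ofReal_zero]
  have hSvfin : ∀ v, volume (Sv v) ≠ ⊤ := fun v => by
    rw [hSvvol v]; exact ENNReal.ofReal_ne_top
  have hint : ∀ v, Integrable ((Sv v).indicator (fun _ => (1:ℝ))) :=
    fun v => (integrable_indicator_iff (hSvmeas v)).2
      (integrableOn_const (hSvfin v))
  set Ico : Set (Fin n → ℝ) := {x | (∀ i, x i ∈ Set.Ico (0:ℝ) 1) ∧ ∑ i, a i * x i ≤ b}
    with hIcoDef
  set Icc : Set (Fin n → ℝ) := {x | (∀ i, x i ∈ Set.Icc (0:ℝ) 1) ∧ ∑ i, a i * x i ≤ b}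
    with hIccDef
  have hIcomeas : MeasurableSet Ico := by
    have : Ico = (⋂ i, {x : Fin n → ℝ | x i ∈ Set.Ico (0:ℝ) 1})
        ∩ {x : Fin n → ℝ | ∑ i, a i * x i ≤ b} := by
      ext x; simp [hIcoDef, Set.mem_iInter]
    rw [this]
    exact (MeasurableSet.iInter fun i =>
        (measurable_pi_apply i) measurableSet_Ico).inter
      (measurableSet_le (Finset.measurable_sum _ fun i _ =>
        (by fun_prop)) measurable_const)
  -- pointwise inclusion-exclusion
  have hpoint : ∀ x : Fin n → ℝ,
      ∑ v : Fin n → Bool, (-1:ℝ) ^ (Finset.univ.filter fun i => v i).card *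
          (Sv v).indicator (fun _ => (1:ℝ)) x
        = Ico.indicator (fun _ => (1:ℝ)) x := by
    intro x
    by_cases hx : ∑ i, a i * x i ≤ b
    · have hind : ∀ v, (Sv v).indicator (fun _ => (1:ℝ)) x
          = ∏ i, (if v i then (if (1:ℝ) ≤ x i then (1:ℝ) else 0)
              else (if (0:ℝ) ≤ x i then 1 else 0)) := by
        intro v
        have h1 : (Sv v).indicator (fun _ => (1:ℝ)) x
            = if (∀ i, (if v i then (1:ℝ) else 0) ≤ x i) then 1 else 0 := by
          by_cases h : ∀ i, (if v i then (1:ℝ) else 0) ≤ x i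
          · rw [Set.indicator_of_mem (show x ∈ Sv v from ⟨h, hx⟩), if_pos h]
          · rw [Set.indicator_of_notMem (fun hmem => h hmem.1), if_neg h]
        have h2 : ∏ i, (if v i then (if (1:ℝ) ≤ x i then (1:ℝ) else 0)
              else (if (0:ℝ) ≤ x i then 1 else 0))
            = if (∀ i, (if v i then (1:ℝ) else 0) ≤ x i) then 1 else 0 := by
          rw [Finset.prod_congr rfl (fun i _ =>
            show _ = if (if v i then (1:ℝ) else 0) ≤ x i then (1:ℝ) else 0 by
              cases hv : v i <;> simp [hv]), Fintype.prod_boole]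
          by_cases hP : ∀ i, (if v i then (1:ℝ) else 0) ≤ x i <;> simp [hP]
        rw [h1, h2]
      rw [Finset.sum_congr rfl fun v _ => by rw [hind v]]
      rw [sum_bool_expand]
      have hfac : ∀ i, (if (0:ℝ) ≤ x i then (1:ℝ) else 0) - (if (1:ℝ) ≤ x i then 1 else 0)
          = if x i ∈ Set.Ico (0:ℝ) 1 then 1 else 0 := by
        intro i
        by_cases h0 : (0:ℝ) ≤ x i <;> by_cases h1 : (1:ℝ) ≤ x i
        · rw [if_pos h0, if_pos h1,
            if_neg (fun hm => (not_lt.mpr h1) (Set.mem_Ico.mp hm).2)]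
          norm_num
        · rw [if_pos h0, if_neg h1, if_pos (Set.mem_Ico.mpr ⟨h0, not_le.mp h1⟩)]
          norm_num
        · exact absurd (le_trans zero_le_one h1) h0
        · rw [if_neg h0, if_neg h1, if_neg (fun hm => h0 (Set.mem_Ico.mp hm).1)]
          norm_num
      rw [Finset.prod_congr rfl fun i _ => hfac i, Fintype.prod_boole]
      by_cases hall : ∀ i, x i ∈ Set.Ico (0:ℝ) 1
      · rw [if_pos hall, Set.indicator_of_mem (show x ∈ Ico from ⟨hall, hx⟩)]
      · rw [if_neg hall, Set.indicator_of_notMem (fun hmem => hall hmem.1)]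
    · have hz : ∀ v, (Sv v).indicator (fun _ => (1:ℝ)) x = 0 := fun v =>
        Set.indicator_of_notMem (fun hmem => hx hmem.2) _
      rw [Set.indicator_of_notMem (fun hmem => hx hmem.2)]
      simp [hz]
  have hIcovol : (volume Ico).toReal
      = ∑ v : Fin n → Bool, (-1:ℝ) ^ (Finset.univ.filter fun i => v i).card *
          (volume (Sv v)).toReal := by
    have h1 : (volume Ico).toReal = ∫ x, Ico.indicator (fun _ => (1:ℝ)) x :=
      (integral_indicator_one hIcomeas).symm
    rw [h1, ← funext hpoint]
    rw [integral_finset_sum Finset.univ (fun v _ => ((hint v).const_mul _))]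
    refine Finset.sum_congr rfl fun v _ => ?_
    rw [integral_const_mul]
    congr 1
    exact integral_indicator_one (hSvmeas v)
  -- Icc vs Ico
  have hdiff : volume (Icc \ Ico) = 0 := by
    have hsub : Icc \ Ico ⊆ ⋃ i, {x : Fin n → ℝ | x i = 1} := by
      rintro x ⟨⟨hmem, hsum⟩, hnot⟩
      simp only [Set.mem_iUnion, Set.mem_setOf_eq]
      by_contra hcon
      push_neg at hcon
      exact hnot ⟨fun i => ⟨(hmem i).1, lt_of_le_of_ne (hmem i).2 (hcon i)⟩, hsum⟩
    exact measure_mono_null hsub (measure_iUnion_null fun i => volume_coord_eq_one i)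
  have hIccIco : volume Icc = volume Ico := by
    apply le_antisymm
    · calc volume Icc ≤ volume (Ico ∪ (Icc \ Ico)) := measure_mono (fun x hx => by
            by_cases h : x ∈ Ico
            · exact Or.inl h
            · exact Or.inr ⟨hx, h⟩)
        _ ≤ volume Ico + volume (Icc \ Ico) := measure_union_le _ _
        _ = volume Ico := by rw [hdiff, add_zero]
    · exact measure_mono (fun x hx => ⟨fun i => ⟨(hx.1 i).1, (hx.1 i).2.le⟩, hx.2⟩)
  rw [hIccIco, hIcovol, Finset.mul_sum]
  refine Finset.sum_congr rfl fun v _ => ?_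
  rw [hSvvol v, ENNReal.toReal_ofReal (by positivity)]
  field_simp
end
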